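/- For every measurable function ψ : ℝ × ℝ → [0,∞], one has the identity ∫_{S²} ∫_{ℝ³} |ν · V| ψ(|ν × V|², |V|²) dV dν = 4π² ∫_0^∞ ( ∫_0^Y ψ(X,Y) dX ) dY, where dν is the surface measure on the unit sphere S² ⊂ ℝ³, · is the scalar product and × the cross product in ℝ³. -/

import Mathlib

open MeasureTheory Set Metric
open scoped ENNReal

noncomputable section

abbrev R3 : Type := EuclideanSpace ℝ (Fin 3)

/-- The surface measure on the unit sphere `S² ⊂ ℝ³`. -/
def sphereMeasure : Measure (Metric.sphere (0 : R3) 1) := (volume : Measure R3).toSphere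

/-- The cross product on `ℝ³` (with the Euclidean norm). -/
def cross3 (v u : R3) : R3 :=
  (EuclideanSpace.equiv (Fin 3) ℝ).symm
    ![v 1 * u 2 - v 2 * u 1, v 2 * u 0 - v 0 * u 2, v 0 * u 1 - v 1 * u 0]


lemma sq_image_Ioi : (fun r : ℝ => r^2) '' Ioi 0 = Ioi 0 := by
  ext x
  constructor
  · rintro ⟨r, hr, rfl⟩; exact pow_pos (mem_Ioi.mp hr) 2
  · intro hx; exact ⟨Real.sqrt x, Real.sqrt_pos.2 hx, Real.sq_sqrt hx.le⟩

lemma sq_subst (k : ℝ → ℝ≥0∞) :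
    ∫⁻ X in Ioi (0:ℝ), k X = ∫⁻ r in Ioi (0:ℝ), ENNReal.ofReal (2*r) * k (r^2) := by
  have hmono : StrictMonoOn (fun r : ℝ => r^2) (Ioi 0) := fun x hx y hy hxy => by
    simp only; nlinarith [hx.out]
  have hd : ∀ x ∈ Ioi (0:ℝ), HasFDerivWithinAt (fun r : ℝ => r^2)
      (ContinuousLinearMap.toSpanSingleton ℝ (2*x)) (Ioi 0) x := fun x _ => by
    simpa using ((hasDerivAt_pow 2 x).hasDerivWithinAt (s := Ioi 0)).hasFDerivWithinAt
  calc ∫⁻ X in Ioi (0:ℝ), k X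
      = ∫⁻ X in (fun r : ℝ => r^2) '' Ioi 0, k X := by rw [sq_image_Ioi]
    _ = ∫⁻ x in Ioi (0:ℝ), ENNReal.ofReal |(ContinuousLinearMap.toSpanSingleton ℝ (2*x)).det| * k (x^2) :=
        lintegral_image_eq_lintegral_abs_det_fderiv_mul volume measurableSet_Ioi hd
          hmono.injOn k
    _ = ∫⁻ r in Ioi (0:ℝ), ENNReal.ofReal (2*r) * k (r^2) := by
        refine setLIntegral_congr_fun measurableSet_Ioi (fun x hx => ?_)
        rw [ContinuousLinearMap.det_toSpanSingleton, abs_of_nonneg (by nlinarith [hx.out])]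

lemma sq_subst' (k : ℝ → ℝ≥0∞) (hk : Measurable k) :
    ∫⁻ r in Ioi (0:ℝ), ENNReal.ofReal r * k (r^2) = (∫⁻ X in Ioi (0:ℝ), k X) / 2 := by
  rw [sq_subst k]
  rw [ENNReal.eq_div_iff (by norm_num) (by norm_num), ← lintegral_const_mul 2
    (by fun_prop)]
  refine lintegral_congr fun x => ?_
  rw [← mul_assoc]
  congr 1
  rw [ENNReal.ofReal_mul (by norm_num)]
  norm_num

lemma lintegral_abs_sq (k : ℝ → ℝ≥0∞) (hk : Measurable k) :
    ∫⁻ t : ℝ, ENNReal.ofReal |t| * k (t^2) = ∫⁻ X in Ioi (0:ℝ), k X := by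
  set F : ℝ → ℝ≥0∞ := fun t => ENNReal.ofReal |t| * k (t^2) with hF
  have hFm : Measurable F := by fun_prop
  have hsplit : ∫⁻ t : ℝ, F t = (∫⁻ t in Ici (0:ℝ), F t) + ∫⁻ t in Iio (0:ℝ), F t := by
    rw [← lintegral_add_compl F measurableSet_Ici, compl_Ici]
  have hIci : ∫⁻ t in Ici (0:ℝ), F t = ∫⁻ t in Ioi (0:ℝ), F t :=
    (setLIntegral_congr Ioi_ae_eq_Ici).symm
  have hneg : ∫⁻ t in Iio (0:ℝ), F t = ∫⁻ t in Ioi (0:ℝ), F t := by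
    have h := (Measure.measurePreserving_neg (volume : Measure ℝ)).setLIntegral_comp_preimage_emb
      (MeasurableEquiv.neg ℝ).measurableEmbedding F (Iio 0)
    have hpre : (Neg.neg : ℝ → ℝ) ⁻¹' Iio 0 = Ioi 0 := by ext x; simp
    rw [hpre] at h
    rw [← h]
    refine lintegral_congr fun x => ?_
    simp [hF, abs_neg, neg_sq]
  have habs : ∫⁻ t in Ioi (0:ℝ), F t = ∫⁻ t in Ioi (0:ℝ), ENNReal.ofReal t * k (t^2) :=
    setLIntegral_congr_fun measurableSet_Ioi (fun x hx => by
      simp [hF, abs_of_pos hx.out])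
  rw [hsplit, hIci, hneg, habs, sq_subst' k hk, ENNReal.add_halves]
lemma vol_ball_E2 : (volume : Measure (EuclideanSpace ℝ (Fin 2))) (ball 0 1) = ENNReal.ofReal Real.pi := by
  rw [EuclideanSpace.volume_ball]
  norm_num [Real.sq_sqrt Real.pi_nonneg, Real.Gamma_two]

lemma toSphere_univ_E2 :
    (volume : Measure (EuclideanSpace ℝ (Fin 2))).toSphere univ = 2 * ENNReal.ofReal Real.pi := by
  rw [Measure.toSphere_apply_univ, vol_ball_E2, finrank_euclideanSpace_fin]
  norm_num

lemma lintegral_norm_sq_E2 (k : ℝ → ℝ≥0∞) (hk : Measurable k) :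
    ∫⁻ w : EuclideanSpace ℝ (Fin 2), k (‖w‖^2) =
      ENNReal.ofReal Real.pi * ∫⁻ X in Ioi (0:ℝ), k X := by
  set E := EuclideanSpace ℝ (Fin 2) with hE
  have hcompl : ({0}ᶜ : Set E) =ᵐ[volume] (univ : Set E) := by
    rw [ae_eq_univ]; simp
  have h1 : ∫⁻ w : E, k (‖w‖^2)
      = ∫⁻ w : ({0}ᶜ : Set E), k (‖(w:E)‖^2) ∂((volume : Measure E).comap (↑)) := by
    rw [lintegral_subtype_comap (measurableSet_singleton (0:E)).compl
      (fun w : E => k (‖w‖^2)), ← setLIntegral_univ, setLIntegral_congr hcompl]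
  have h2 := (Measure.measurePreserving_homeomorphUnitSphereProd
      (volume : Measure E)).lintegral_comp_emb
      (Homeomorph.measurableEmbedding _)
      (fun p : sphere (0:E) 1 × Ioi (0:ℝ) => k (((p.2 : ℝ))^2))
  simp only [homeomorphUnitSphereProd_apply_snd_coe] at h2
  have hdim : Module.finrank ℝ E - 1 = 1 := by
    show Module.finrank ℝ (EuclideanSpace ℝ (Fin 2)) - 1 = 1
    rw [finrank_euclideanSpace_fin]
  rw [hdim] at h2
  have h3 : ∫⁻ p : sphere (0:E) 1 × Ioi (0:ℝ), k (((p.2 : ℝ))^2)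
        ∂((volume : Measure E).toSphere.prod (Measure.volumeIoiPow 1))
      = (volume : Measure E).toSphere univ * ∫⁻ y : Ioi (0:ℝ), k (((y:ℝ))^2)
        ∂(Measure.volumeIoiPow 1) := by
    rw [lintegral_prod _ (by fun_prop)]
    simp [lintegral_const, mul_comm]
  have h4 : ∫⁻ y : Ioi (0:ℝ), k (((y:ℝ))^2) ∂(Measure.volumeIoiPow 1)
      = ∫⁻ r in Ioi (0:ℝ), ENNReal.ofReal r * k (r^2) := by
    rw [Measure.volumeIoiPow, lintegral_withDensity_eq_lintegral_mul _ (by fun_prop)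
      (by fun_prop)]
    rw [show (fun y : Ioi (0:ℝ) => ((fun r : Ioi (0:ℝ) => ENNReal.ofReal ((r:ℝ)^1)) *
      (fun y : Ioi (0:ℝ) => k (((y:ℝ))^2))) y)
      = fun y : Ioi (0:ℝ) => (fun x : ℝ => ENNReal.ofReal x * k (x^2)) (y:ℝ) by
        funext y; simp]
    exact lintegral_subtype_comap measurableSet_Ioi
      (fun x : ℝ => ENNReal.ofReal x * k (x^2))
  rw [h1, h2, h3, h4, sq_subst' k hk, toSphere_univ_E2]
  rw [mul_comm (2:ℝ≥0∞) _, mul_assoc, ENNReal.mul_div_cancel' (by norm_num) (by norm_num)]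

lemma vol_ball_R3 : (volume : Measure R3) (ball 0 1) = ENNReal.ofReal (4/3*Real.pi) := by
  rw [EuclideanSpace.volume_ball]
  have h32 : Real.Gamma ((Fintype.card (Fin 3) : ℝ)/2 + 1) = 3/4 * Real.sqrt Real.pi := by
    rw [Fintype.card_fin, show ((3:ℕ):ℝ)/2 + 1 = 3/2 + 1 by norm_num,
      Real.Gamma_add_one (by norm_num), show (3:ℝ)/2 = 1/2 + 1 by norm_num,
      Real.Gamma_add_one (by norm_num), Real.Gamma_one_half_eq]
    ring
  have hne : Real.sqrt Real.pi ≠ 0 := by positivity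
  have hval : Real.sqrt Real.pi ^ (Fintype.card (Fin 3)) /
      Real.Gamma ((Fintype.card (Fin 3) : ℝ)/2 + 1) = 4/3*Real.pi := by
    rw [h32, Fintype.card_fin, pow_succ, Real.sq_sqrt Real.pi_nonneg]
    field_simp
  rw [hval]
  norm_num

lemma sphereMeasure_univ : sphereMeasure univ = ENNReal.ofReal (4*Real.pi) := by
  rw [sphereMeasure, Measure.toSphere_apply_univ, vol_ball_R3]
  have : Module.finrank ℝ R3 = 3 := finrank_euclideanSpace_fin
  rw [this, show ((3:ℕ):ℝ≥0∞) = ENNReal.ofReal 3 by simp, ← ENNReal.ofReal_mul (by norm_num)]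
  congr 1
  ring

lemma inner_int_reduce (ν : R3) (hν : ‖ν‖ = 1) (f : ℝ → ℝ → ℝ≥0∞) :
    ∫⁻ V : R3, f (inner ℝ ν V : ℝ) (‖V‖^2) = ∫⁻ V : R3, f (V 0) (‖V‖^2) := by
  set e₀ : R3 := EuclideanSpace.single 0 1 with he
  have he₀ : ‖e₀‖ = 1 := by simp [he, EuclideanSpace.norm_single]
  set T := Submodule.reflection (ℝ ∙ (e₀ - ν))ᗮ with hT
  have hTe : T e₀ = ν := Submodule.reflection_sub (by rw [he₀, hν])
  have hmp : MeasurePreserving T volume volume := T.measurePreserving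
  have h := hmp.lintegral_comp_emb (T.toHomeomorph.measurableEmbedding)
    (fun V : R3 => f (inner ℝ ν V : ℝ) (‖V‖^2))
  rw [← h]
  refine lintegral_congr fun V => ?_
  show f (inner ℝ ν (T V) : ℝ) (‖T V‖^2) = f (V 0) (‖V‖^2)
  rw [T.norm_map, ← hTe, T.inner_map_map, he, EuclideanSpace.inner_single_left]
  simp
lemma norm_sq_R3 (x : R3) : ‖x‖^2 = x 0^2 + x 1^2 + x 2^2 := by
  rw [EuclideanSpace.norm_eq, Real.sq_sqrt (by positivity)]
  simp [Fin.sum_univ_three, sq_abs]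

lemma inner_R3 (x y : R3) : (inner ℝ x y : ℝ) = x 0 * y 0 + x 1 * y 1 + x 2 * y 2 := by
  simp [PiLp.inner_apply, RCLike.inner_apply, Fin.sum_univ_three, mul_comm]

lemma cross3_norm_sq {ν : R3} (V : R3) (hν : ‖ν‖ = 1) :
    ‖cross3 ν V‖^2 = ‖V‖^2 - (inner ℝ ν V : ℝ)^2 := by
  have h1 : ν 0^2 + ν 1^2 + ν 2^2 = 1 := by
    have := norm_sq_R3 ν; rw [hν] at this; linarith
  have h2 := norm_sq_R3 (cross3 ν V)
  have h3 := norm_sq_R3 V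
  rw [h2, h3, inner_R3]
  show (ν 1 * V 2 - ν 2 * V 1)^2 + (ν 2 * V 0 - ν 0 * V 2)^2 + (ν 0 * V 1 - ν 1 * V 0)^2 = _
  linear_combination (V 0^2 + V 1^2 + V 2^2) * h1

lemma norm_sq_E2 (x : EuclideanSpace ℝ (Fin 2)) : ‖x‖^2 = x 0^2 + x 1^2 := by
  rw [EuclideanSpace.norm_eq, Real.sq_sqrt (by positivity)]
  simp [Fin.sum_univ_two, sq_abs]

lemma shift_int (X : ℝ) (k : ℝ → ℝ≥0∞) :
    ∫⁻ u in Ioi (0:ℝ), k (u+X) = ∫⁻ Y in Ioi X, k Y := by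
  have h := (measurePreserving_add_right volume X).setLIntegral_comp_preimage_emb
    (MeasurableEquiv.addRight X).measurableEmbedding k (Ioi X)
  rw [show (· + X) ⁻¹' Ioi X = Ioi (0:ℝ) by ext u; simp] at h
  exact h

lemma e0_integral (ψ : ℝ × ℝ → ℝ≥0∞) (hψ : Measurable ψ) :
    ∫⁻ V : R3, ENNReal.ofReal |V 0| * ψ (‖V‖^2 - (V 0)^2, ‖V‖^2)
      = ENNReal.ofReal Real.pi * ∫⁻ X in Ioi (0:ℝ), ∫⁻ Y in Ioi X, ψ (X, Y) := by
  set H : ℝ → ℝ → ℝ → ℝ≥0∞ :=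
    fun t a b => ENNReal.ofReal |t| * ψ (a^2+b^2, t^2+(a^2+b^2)) with hH
  have step1 : ∫⁻ V : R3, ENNReal.ofReal |V 0| * ψ (‖V‖^2 - (V 0)^2, ‖V‖^2)
      = ∫⁻ V : R3, H (V 0) (V 1) (V 2) := by
    refine lintegral_congr fun V => ?_
    rw [hH]
    simp only
    rw [show ‖V‖^2 - (V 0)^2 = (V 1)^2 + (V 2)^2 by rw [norm_sq_R3]; ring,
      show ‖V‖^2 = (V 0)^2 + ((V 1)^2+(V 2)^2) by rw [norm_sq_R3]; ring]
  have step2 : (∫⁻ f : Fin 3 → ℝ, H (f 0) (f 1) (f 2)) = ∫⁻ V : R3, H (V 0) (V 1) (V 2) :=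
    ((EuclideanSpace.volume_preserving_symm_measurableEquiv_toLp (Fin 3)).symm
      (MeasurableEquiv.toLp 2 (Fin 3 → ℝ)).symm).lintegral_comp_emb
      (MeasurableEquiv.measurableEmbedding _) (fun V : R3 => H (V 0) (V 1) (V 2))
  have step3 : (∫⁻ p : ℝ × (Fin 2 → ℝ), H p.1 (p.2 0) (p.2 1))
      = ∫⁻ f : Fin 3 → ℝ, H (f 0) (f 1) (f 2) :=
    ((volume_preserving_piFinSuccAbove (fun _ : Fin 3 => ℝ) 0).symm
      (MeasurableEquiv.piFinSuccAbove (fun _ : Fin 3 => ℝ) 0)).lintegral_comp_emb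
      (MeasurableEquiv.measurableEmbedding _) (fun f : Fin 3 → ℝ => H (f 0) (f 1) (f 2))
  have hHm : Measurable fun p : ℝ × (Fin 2 → ℝ) => H p.1 (p.2 0) (p.2 1) := by
    rw [hH]
    exact Measurable.mul (by fun_prop) (hψ.comp (by fun_prop))
  have step4 : (∫⁻ p : ℝ × (Fin 2 → ℝ), H p.1 (p.2 0) (p.2 1))
      = ∫⁻ t : ℝ, ∫⁻ w : Fin 2 → ℝ, H t (w 0) (w 1) :=
    lintegral_prod _ hHm.aemeasurable
  have step5 : ∀ t : ℝ, (∫⁻ w : Fin 2 → ℝ, H t (w 0) (w 1))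
      = ENNReal.ofReal Real.pi *
        ∫⁻ X in Ioi (0:ℝ), ENNReal.ofReal |t| * ψ (X, t^2+X) := by
    intro t
    have hk : Measurable (fun X : ℝ => ψ (X, t^2+X)) := hψ.comp (by fun_prop)
    have htrans : (∫⁻ w : EuclideanSpace ℝ (Fin 2), H t (w 0) (w 1))
        = ∫⁻ w : Fin 2 → ℝ, H t (w 0) (w 1) :=
      (EuclideanSpace.volume_preserving_symm_measurableEquiv_toLp (Fin 2)).lintegral_comp_emb
        (MeasurableEquiv.measurableEmbedding _) (fun w : Fin 2 → ℝ => H t (w 0) (w 1))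
    rw [← htrans]
    have hptw : ∀ w : EuclideanSpace ℝ (Fin 2), H t (w 0) (w 1)
        = ENNReal.ofReal |t| * (fun X : ℝ => ψ (X, t^2+X)) (‖w‖^2) := fun w => by
      rw [hH]; simp only [norm_sq_E2]
    rw [lintegral_congr hptw,
      lintegral_const_mul (ENNReal.ofReal |t|)
        (show Measurable fun w : EuclideanSpace ℝ (Fin 2) =>
            (fun X : ℝ => ψ (X, t^2+X)) (‖w‖^2)
          from hk.comp (measurable_norm.pow_const 2)),
      lintegral_norm_sq_E2 _ hk,
      lintegral_const_mul (ENNReal.ofReal |t|) hk]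
    ring
  have step6 : (∫⁻ t : ℝ, ∫⁻ w : Fin 2 → ℝ, H t (w 0) (w 1))
      = ENNReal.ofReal Real.pi *
        ∫⁻ t : ℝ, ∫⁻ X in Ioi (0:ℝ), ENNReal.ofReal |t| * ψ (X, t^2+X) := by
    rw [← lintegral_const_mul _ (by
      apply Measurable.lintegral_prod_right (ν := volume.restrict (Ioi 0))
      exact Measurable.mul (by fun_prop) (hψ.comp (by fun_prop)))]
    exact lintegral_congr fun t => step5 t
  have hswap : (∫⁻ t : ℝ, ∫⁻ X in Ioi (0:ℝ), ENNReal.ofReal |t| * ψ (X, t^2+X))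
      = ∫⁻ X in Ioi (0:ℝ), ∫⁻ t : ℝ, ENNReal.ofReal |t| * ψ (X, t^2+X) :=
    lintegral_lintegral_swap (by
      exact (Measurable.mul (by fun_prop) (hψ.comp (by fun_prop))).aemeasurable)
  have step7 : ∀ X : ℝ, (∫⁻ t : ℝ, ENNReal.ofReal |t| * ψ (X, t^2+X))
      = ∫⁻ Y in Ioi X, ψ (X, Y) := by
    intro X
    have hk : Measurable (fun u : ℝ => ψ (X, u+X)) := hψ.comp (by fun_prop)
    rw [lintegral_abs_sq (fun u => ψ (X, u+X)) hk, shift_int X (fun Y => ψ (X, Y))]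
  rw [step1, ← step2, ← step3, step4, step6, hswap]
  congr 1
  exact lintegral_congr fun X => step7 X
lemma swap_region (ψ : ℝ × ℝ → ℝ≥0∞) (hψ : Measurable ψ) :
    (∫⁻ X in Ioi (0:ℝ), ∫⁻ Y in Ioi X, ψ (X, Y))
      = ∫⁻ Y in Ioi (0:ℝ), ∫⁻ X in Ioc 0 Y, ψ (X, Y) := by
  have hs : MeasurableSet {p : ℝ × ℝ | 0 < p.1 ∧ p.1 < p.2} :=
    (measurableSet_lt measurable_const measurable_fst).inter
      (measurableSet_lt measurable_fst measurable_snd)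
  set G : ℝ → ℝ → ℝ≥0∞ :=
    fun X Y => ({p : ℝ × ℝ | 0 < p.1 ∧ p.1 < p.2}).indicator ψ (X, Y) with hG
  have hGm : Measurable (Function.uncurry G) := by
    have h : Function.uncurry G = ({p : ℝ × ℝ | 0 < p.1 ∧ p.1 < p.2}).indicator ψ := by
      funext p; cases p; rfl
    rw [h]; exact hψ.indicator hs
  have hL : (∫⁻ X in Ioi (0:ℝ), ∫⁻ Y in Ioi X, ψ (X, Y)) = ∫⁻ X : ℝ, ∫⁻ Y : ℝ, G X Y := by
    rw [← lintegral_indicator measurableSet_Ioi]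
    refine lintegral_congr fun X => ?_
    by_cases hX : 0 < X
    · rw [indicator_of_mem (mem_Ioi.2 hX), ← lintegral_indicator measurableSet_Ioi]
      refine lintegral_congr fun Y => ?_
      by_cases hY : X < Y
      · rw [indicator_of_mem (mem_Ioi.2 hY), hG]
        exact (indicator_of_mem
          (show (X,Y) ∈ {p : ℝ×ℝ | 0 < p.1 ∧ p.1 < p.2} from ⟨hX, hY⟩) ψ).symm
      · rw [indicator_of_notMem (by simpa using hY), hG]
        exact (indicator_of_notMem (fun h => hY h.2) ψ).symm
    · rw [indicator_of_notMem (by simpa using hX)]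
      symm
      rw [show (fun Y => G X Y) = fun _ => (0:ℝ≥0∞) from
        funext fun Y => indicator_of_notMem (fun h => hX h.1) ψ, lintegral_const, zero_mul]
  have hR : (∫⁻ Y in Ioi (0:ℝ), ∫⁻ X in Ioc 0 Y, ψ (X, Y)) = ∫⁻ Y : ℝ, ∫⁻ X : ℝ, G X Y := by
    rw [← lintegral_indicator measurableSet_Ioi]
    refine lintegral_congr fun Y => ?_
    by_cases hY : 0 < Y
    · rw [indicator_of_mem (mem_Ioi.2 hY)]
      rw [← setLIntegral_congr (Ioo_ae_eq_Ioc (a := (0:ℝ)) (b := Y)),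
        ← lintegral_indicator measurableSet_Ioo]
      refine lintegral_congr fun X => ?_
      by_cases hX : X ∈ Ioo (0:ℝ) Y
      · rw [indicator_of_mem hX, hG]
        exact (indicator_of_mem (show (X,Y) ∈ {p : ℝ×ℝ | 0 < p.1 ∧ p.1 < p.2} from
          ⟨hX.1, hX.2⟩) ψ).symm
      · rw [indicator_of_notMem hX, hG]
        exact (indicator_of_notMem (fun h => hX ⟨h.1, h.2⟩) ψ).symm
    · rw [indicator_of_notMem (by simpa using hY)]
      symm
      rw [show (fun X => G X Y) = fun _ => (0:ℝ≥0∞) from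
        funext fun X => indicator_of_notMem (fun h => hY (lt_trans h.1 h.2)) ψ,
        lintegral_const, zero_mul]
  rw [hL, hR]
  exact lintegral_lintegral_swap hGm.aemeasurable

/-- **Change of variables to conserved quantities** (final computation in the proof of
Lemma 8.1): for every measurable `ψ : ℝ × ℝ → [0,∞]`,
`∫_{S²} ∫_{ℝ³} |ν·V| ψ(|ν × V|², |V|²) dV dν = 4π² ∫_0^∞ ∫_0^Y ψ(X,Y) dX dY`. -/
theorem scattering_parameters_change_of_variables
    (ψ : ℝ × ℝ → ℝ≥0∞) (hψ : Measurable ψ) :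
    (∫⁻ ν : Metric.sphere (0 : R3) 1,
        (∫⁻ V : R3,
          ENNReal.ofReal |(inner ℝ (ν : R3) V : ℝ)| *
            ψ (‖cross3 (ν : R3) V‖ ^ 2, ‖V‖ ^ 2))
      ∂sphereMeasure)
      = ENNReal.ofReal (4 * Real.pi ^ 2) *
          ∫⁻ Y in Set.Ioi (0 : ℝ), ∫⁻ X in Set.Ioc (0 : ℝ) Y, ψ (X, Y) := by
  have hmemb : ∀ ν : Metric.sphere (0:R3) 1, ‖(ν : R3)‖ = 1 := fun ν =>
    mem_sphere_zero_iff_norm.1 ν.2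
  set D := ∫⁻ X in Ioi (0:ℝ), ∫⁻ Y in Ioi X, ψ (X, Y) with hD
  set f : ℝ → ℝ → ℝ≥0∞ := fun t Y => ENNReal.ofReal |t| * ψ (Y - t^2, Y) with hf
  have hinner : ∀ ν : Metric.sphere (0:R3) 1,
      (∫⁻ V : R3, ENNReal.ofReal |(inner ℝ (ν:R3) V : ℝ)| *
        ψ (‖cross3 (ν:R3) V‖^2, ‖V‖^2))
      = ENNReal.ofReal Real.pi * D := by
    intro ν
    have h1 : ∀ V : R3, ENNReal.ofReal |(inner ℝ (ν:R3) V : ℝ)| *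
        ψ (‖cross3 (ν:R3) V‖^2, ‖V‖^2)
        = f (inner ℝ (ν:R3) V : ℝ) (‖V‖^2) := fun V => by
      rw [hf]
      simp only
      rw [cross3_norm_sq V (hmemb ν)]
    calc (∫⁻ V : R3, ENNReal.ofReal |(inner ℝ (ν:R3) V : ℝ)| *
          ψ (‖cross3 (ν:R3) V‖^2, ‖V‖^2))
        = ∫⁻ V : R3, f (inner ℝ (ν:R3) V : ℝ) (‖V‖^2) := lintegral_congr h1
      _ = ∫⁻ V : R3, f (V 0) (‖V‖^2) := inner_int_reduce (ν:R3) (hmemb ν) f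
      _ = ENNReal.ofReal Real.pi * D := by
          rw [hD]
          exact e0_integral ψ hψ
  rw [lintegral_congr hinner, lintegral_const, sphereMeasure_univ, hD,
    swap_region ψ hψ]
  rw [show ENNReal.ofReal (4*Real.pi^2)
      = ENNReal.ofReal Real.pi * ENNReal.ofReal (4*Real.pi) by
    rw [← ENNReal.ofReal_mul Real.pi_nonneg]; congr 1; ring]
  ring
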